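/- arXiv:2304.05228 — 2 statements merged into one kernel-verified Lean document; each statement's English description precedes it below -/
import Mathlib

section
/- Let (X, Y) be a complete hereditary cotorsion pair in an abelian category A and let A be an object of A and n ≥ 1 an integer. Then A has X-resolution dimension at most n if and only if Ext^{n+1}(A, Y) = 0 for every object Y ∈ Y. Consequently, X-resdim(A) = sup{ i ∈ ℕ : Ext^i(A, Y) ≠ 0 for some Y ∈ Y }. -/
open CategoryTheory Limits

universe w v u

namespace PaperAB

variable {C : Type u} [Category.{v} C] [Abelian C] [HasExt.{w} C]

/-- Vanishing of `Ext^n(A, B)`. -/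
def extZero (A B : C) (n : ℕ) : Prop := Subsingleton (Abelian.Ext A B n)

/-- The right `Ext^1`-orthogonal class of a class `𝒳`. -/
def rightOrth (𝒳 : C → Prop) : C → Prop := fun B => ∀ A, 𝒳 A → extZero A B 1

/-- The left `Ext^1`-orthogonal class of a class `𝒴`. -/
def leftOrth (𝒴 : C → Prop) : C → Prop := fun A => ∀ B, 𝒴 B → extZero A B 1

/-- `f, g` form a short exact sequence `0 → A → B → D → 0`. -/
def IsSES {A B D : C} (f : A ⟶ B) (g : B ⟶ D) : Prop :=
  ∃ (zero : f ≫ g = 0), (ShortComplex.mk f g zero).ShortExact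

/-- `(𝒳, 𝒴)` is a cotorsion pair. -/
structure CotorsionPair (𝒳 𝒴 : C → Prop) : Prop where
  eqLeft : ∀ A, 𝒳 A ↔ leftOrth 𝒴 A
  eqRight : ∀ B, 𝒴 B ↔ rightOrth 𝒳 B

/-- Completeness of a pair of classes `(𝒳, 𝒴)`: every object admits a special
`𝒳`-precover and a special `𝒴`-preenvelope. -/
def Complete (𝒳 𝒴 : C → Prop) : Prop :=
  ∀ A : C,
    (∃ (Y X : C) (f : Y ⟶ X) (g : X ⟶ A), IsSES f g ∧ 𝒳 X ∧ 𝒴 Y) ∧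
    (∃ (Y X : C) (f : A ⟶ Y) (g : Y ⟶ X), IsSES f g ∧ 𝒴 Y ∧ 𝒳 X)

/-- Heredity: `Ext^n(𝒳, 𝒴) = 0` for all `n ≥ 1`. -/
def Hereditary (𝒳 𝒴 : C → Prop) : Prop :=
  ∀ A B, 𝒳 A → 𝒴 B → ∀ n, 1 ≤ n → extZero A B n

/-- Complete hereditary cotorsion pair. -/
structure CHCP (𝒳 𝒴 : C → Prop) : Prop where
  cotorsion : CotorsionPair 𝒳 𝒴
  complete : Complete 𝒳 𝒴
  hereditary : Hereditary 𝒳 𝒴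

/-- `ResDimLE 𝒳 A n` : there exists an exact sequence
`0 → X n → ⋯ → X 0 → A → 0` with all `X i ∈ 𝒳`. -/
def ResDimLE (𝒳 : C → Prop) (A : C) (n : ℕ) : Prop :=
  ∃ (X : ℕ → C) (d : ∀ i, X (i + 1) ⟶ X i) (ε : X 0 ⟶ A),
    (∀ i, i ≤ n → 𝒳 (X i)) ∧ (∀ i, n < i → IsZero (X i)) ∧ Epi ε ∧
    (∃ (zero : d 0 ≫ ε = 0), (ShortComplex.mk (d 0) ε zero).Exact) ∧
    (∀ i, ∃ (zero : d (i + 1) ≫ d i = 0),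
      (ShortComplex.mk (d (i + 1)) (d i) zero).Exact)

/-- Objects of finite `𝒳`-resolution dimension (the class `X̂`). -/
def FinResDim (𝒳 : C → Prop) (A : C) : Prop := ∃ n, ResDimLE 𝒳 A n

/-- The `𝒳`-resolution dimension of `A`, in `ℕ∞`. -/
noncomputable def ResDim (𝒳 : C → Prop) (A : C) : ℕ∞ :=
  sInf {m : ℕ∞ | ∃ n : ℕ, m = (n : ℕ∞) ∧ ResDimLE 𝒳 A n}

/-- The intersection of two classes. -/
def Inter (𝒳 𝒴 : C → Prop) : C → Prop := fun A => 𝒳 A ∧ 𝒴 A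

def ClosedUnderExtensions (𝒲 : C → Prop) : Prop :=
  ∀ ⦃A B D : C⦄ (f : A ⟶ B) (g : B ⟶ D), IsSES f g → 𝒲 A → 𝒲 D → 𝒲 B

def ClosedUnderKernels (𝒲 : C → Prop) : Prop :=
  ∀ ⦃A B D : C⦄ (f : A ⟶ B) (g : B ⟶ D), IsSES f g → 𝒲 B → 𝒲 D → 𝒲 A

def ClosedUnderCokernels (𝒲 : C → Prop) : Prop :=
  ∀ ⦃A B D : C⦄ (f : A ⟶ B) (g : B ⟶ D), IsSES f g → 𝒲 A → 𝒲 B → 𝒲 D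

def ClosedUnderSummands (𝒲 : C → Prop) : Prop :=
  ∀ ⦃A B : C⦄ (i : A ⟶ B) (p : B ⟶ A), i ≫ p = 𝟙 A → 𝒲 B → 𝒲 A

/-- A class is thick if it is closed under direct summands and has the
two-out-of-three property on short exact sequences. -/
def IsThick (𝒲 : C → Prop) : Prop :=
  ClosedUnderSummands 𝒲 ∧ ClosedUnderExtensions 𝒲 ∧
    ClosedUnderKernels 𝒲 ∧ ClosedUnderCokernels 𝒲

/-- A class is left thick if it is closed under direct summands, extensions and
kernels of epimorphisms. -/
def LeftThick (𝒲 : C → Prop) : Prop :=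
  ClosedUnderSummands 𝒲 ∧ ClosedUnderExtensions 𝒲 ∧ ClosedUnderKernels 𝒲

/-- A class is right thick if it is closed under direct summands, extensions and
cokernels of monomorphisms. -/
def RightThick (𝒲 : C → Prop) : Prop :=
  ClosedUnderSummands 𝒲 ∧ ClosedUnderExtensions 𝒲 ∧ ClosedUnderCokernels 𝒲

/-- `ω` is a cogenerator for `𝒳`. -/
def IsCogeneratorFor (ω 𝒳 : C → Prop) : Prop :=
  (∀ A, ω A → 𝒳 A) ∧
  ∀ A, 𝒳 A → ∃ (W A' : C) (f : A ⟶ W) (g : W ⟶ A'), IsSES f g ∧ ω W ∧ 𝒳 A'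

/-- `ω` is an injective cogenerator for `𝒳`. -/
def IsInjCogeneratorFor (ω 𝒳 : C → Prop) : Prop :=
  IsCogeneratorFor ω 𝒳 ∧ ∀ A W, 𝒳 A → ω W → ∀ n, 1 ≤ n → extZero A W n

/-- A left weak Auslander–Buchweitz context `(𝒳, 𝒴, ω)`. -/
structure LeftWeakABContext (𝒳 𝒴 ω : C → Prop) : Prop where
  ab1 : LeftThick 𝒳
  ab2 : RightThick 𝒴
  ab2' : ∀ A, 𝒴 A → FinResDim 𝒳 A
  ab3 : (∀ A, ω A ↔ 𝒳 A ∧ 𝒴 A) ∧ IsInjCogeneratorFor ω 𝒳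

/-- A left Auslander–Buchweitz context: a left weak AB-context in which every
object has finite `𝒳`-resolution dimension. -/
structure LeftABContext (𝒳 𝒴 ω : C → Prop) extends LeftWeakABContext 𝒳 𝒴 ω : Prop where
  hat_all : ∀ A : C, FinResDim 𝒳 A

end PaperAB

namespace PaperAB

section Aux

variable {C : Type u} [Category.{v} C] [Abelian C] [HasExt.{w} C]

open Abelian ZeroObject

lemma extZero_iff_forall {A B : C} {n : ℕ} :
    extZero A B n ↔ ∀ x : Abelian.Ext A B n, x = 0 :=
  ⟨fun h x => @Subsingleton.elim _ h x 0, fun h => ⟨fun a b => by rw [h a, h b]⟩⟩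

lemma extZero_of_iso {X A B : C} (e : X ⟶ A) [IsIso e] {n : ℕ}
    (h : extZero X B n) : extZero A B n := by
  haveI : Subsingleton (Abelian.Ext X B n) := h
  have hs : Function.Surjective
      (fun x : Abelian.Ext X B n => (Abelian.Ext.mk₀ (inv e)).comp x (zero_add n)) := fun y =>
    ⟨(Abelian.Ext.mk₀ e).comp y (zero_add n), by simp⟩
  exact hs.subsingleton

/-- Dimension shifting, surjectivity part. -/
lemma extZero_succ_of_ses {B : C} {S : ShortComplex C} (hS : S.ShortExact)
    (m : ℕ) (h1 : extZero S.X₁ B m) (h2 : extZero S.X₂ B (m + 1)) :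
    extZero S.X₃ B (m + 1) := by
  haveI : Subsingleton (Abelian.Ext S.X₁ B m) := h1
  haveI : Subsingleton (Abelian.Ext S.X₂ B (m + 1)) := h2
  rw [extZero_iff_forall]
  intro x
  have hx : (Abelian.Ext.mk₀ S.g).comp x (zero_add _) = 0 := Subsingleton.elim _ _
  obtain ⟨x₁, hx₁⟩ := Abelian.Ext.contravariant_sequence_exact₃ hS B x hx (n₀ := m) (by omega)
  rw [← hx₁, Subsingleton.elim x₁ 0, Abelian.Ext.comp_zero]

/-- Dimension shifting, injectivity part. -/
lemma extZero_pred_of_ses {B : C} {S : ShortComplex C} (hS : S.ShortExact)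
    (m : ℕ) (h1 : extZero S.X₂ B m) (h2 : extZero S.X₃ B (m + 1)) :
    extZero S.X₁ B m := by
  haveI : Subsingleton (Abelian.Ext S.X₂ B m) := h1
  haveI : Subsingleton (Abelian.Ext S.X₃ B (m + 1)) := h2
  rw [extZero_iff_forall]
  intro x
  have hx : hS.extClass.comp x (show 1 + m = m + 1 by omega) = 0 := Subsingleton.elim _ _
  obtain ⟨x₂, hx₂⟩ := Abelian.Ext.contravariant_sequence_exact₁ hS B x (show 1 + m = m + 1 by omega) hx
  rw [← hx₂, Subsingleton.elim x₂ 0, Abelian.Ext.comp_zero]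

lemma resDimLE_of_mem {𝒳 : C → Prop} {A : C} (hA : 𝒳 A) : ResDimLE 𝒳 A 0 := by
  refine ⟨fun i => match i with | 0 => A | _ + 1 => 0,
    fun i => 0, 𝟙 A, ?_, ?_, inferInstance, ⟨zero_comp, ?_⟩, fun i => ⟨zero_comp, ?_⟩⟩
  · rintro (_ | i) hi
    · exact hA
    · omega
  · rintro (_ | i) hi
    · omega
    · exact isZero_zero C
  · rw [ShortComplex.exact_iff_mono _ rfl]
    infer_instance
  · exact ShortComplex.exact_of_isZero_X₂ _ (isZero_zero C)

/-- Prolonging a resolution of the kernel of a special precover. -/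
lemma resDimLE_step {𝒳 : C → Prop} {K X₀ A : C} {f : K ⟶ X₀} {g : X₀ ⟶ A}
    (hses : IsSES f g) (hX0 : 𝒳 X₀) {n : ℕ} (hK : ResDimLE 𝒳 K n) :
    ResDimLE 𝒳 A (n + 1) := by
  obtain ⟨X, d, ε, hmem, hz, hepi, ⟨z0, e0⟩, hd⟩ := hK
  obtain ⟨zfg, hfg⟩ := hses
  haveI := hepi
  haveI := hfg.mono_f
  haveI := hfg.epi_g
  refine ⟨fun i => match i with | 0 => X₀ | j + 1 => X j,
    fun i => match i with | 0 => ε ≫ f | j + 1 => d j, g, ?_, ?_, hfg.epi_g, ?_, ?_⟩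
  · rintro (_ | i) hi
    · exact hX0
    · exact hmem i (by omega)
  · rintro (_ | i) hi
    · omega
    · exact hz i (by omega)
  · refine ⟨by rw [Category.assoc, zfg, comp_zero], ?_⟩
    let φ : ShortComplex.mk (ε ≫ f) g (by rw [Category.assoc, zfg, comp_zero]) ⟶
        ShortComplex.mk f g zfg :=
      ⟨ε, 𝟙 _, 𝟙 _, by simp, by simp⟩
    haveI : Epi φ.τ₁ := hepi
    haveI : IsIso φ.τ₂ := inferInstanceAs (IsIso (𝟙 X₀))
    haveI : Mono φ.τ₃ := inferInstanceAs (Mono (𝟙 A))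
    exact (ShortComplex.exact_iff_of_epi_of_isIso_of_mono φ).2 hfg.exact
  · rintro (_ | i)
    · refine ⟨by rw [← Category.assoc, z0, zero_comp], ?_⟩
      let φ : ShortComplex.mk (d 0) ε z0 ⟶
          ShortComplex.mk (d 0) (ε ≫ f) (by rw [← Category.assoc, z0, zero_comp]) :=
        ⟨𝟙 _, 𝟙 _, f, by simp, by simp⟩
      haveI : Epi φ.τ₁ := inferInstanceAs (Epi (𝟙 _))
      haveI : IsIso φ.τ₂ := inferInstanceAs (IsIso (𝟙 _))
      haveI : Mono φ.τ₃ := hfg.mono_f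
      exact (ShortComplex.exact_iff_of_epi_of_isIso_of_mono φ).1 e0
    · exact hd i

/-- Cutting off the bottom of a resolution. -/
lemma resDimLE_unstep {𝒳 : C → Prop} {A : C} {n : ℕ} (h : ResDimLE 𝒳 A (n + 1)) :
    ∃ (K X₀ : C) (f : K ⟶ X₀) (g : X₀ ⟶ A), IsSES f g ∧ 𝒳 X₀ ∧ ResDimLE 𝒳 K n := by
  obtain ⟨X, d, ε, hmem, hz, hepi, ⟨z0, e0⟩, hd⟩ := h
  haveI := hepi
  obtain ⟨z1, e1⟩ := hd 0
  refine ⟨kernel ε, X 0, kernel.ι ε, ε, ⟨kernel.condition ε, ?_⟩, hmem 0 (by omega),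
    fun i => X (i + 1), fun i => d (i + 1), kernel.lift ε (d 0) z0,
    fun i hi => hmem (i + 1) (by omega), fun i hi => hz (i + 1) (by omega), ?_, ?_, fun i => hd (i + 1)⟩
  · exact { exact := ShortComplex.exact_of_f_is_kernel _ (kernelIsKernel ε) }
  · have heq : kernel.lift ε (d 0) z0 =
        (ShortComplex.mk (d 0) ε z0).toCycles ≫ (ShortComplex.mk (d 0) ε z0).cyclesIsoKernel.hom := by
      rw [← cancel_mono (kernel.ι ε)]
      simp [ShortComplex.cyclesIsoKernel]
    rw [heq]
    haveI := e0.epi_toCycles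
    exact epi_comp _ _
  · have hz' : d 1 ≫ kernel.lift ε (d 0) z0 = 0 := by
      rw [← cancel_mono (kernel.ι ε)]
      simp [z1]
    refine ⟨hz', ?_⟩
    let φ : ShortComplex.mk (d 1) (kernel.lift ε (d 0) z0) hz' ⟶
        ShortComplex.mk (d 1) (d 0) z1 :=
      ⟨𝟙 _, 𝟙 _, kernel.ι ε, by simp, by simp⟩
    haveI : Epi φ.τ₁ := inferInstanceAs (Epi (𝟙 _))
    haveI : IsIso φ.τ₂ := inferInstanceAs (IsIso (𝟙 _))
    haveI : Mono φ.τ₃ := inferInstanceAs (Mono (kernel.ι ε))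
    exact (ShortComplex.exact_iff_of_epi_of_isIso_of_mono φ).2 e1

lemma extZero_of_resDimLE {𝒳 𝒴 : C → Prop} (h : CHCP 𝒳 𝒴) :
    ∀ (n : ℕ) (A : C), ResDimLE 𝒳 A n → ∀ B, 𝒴 B → ∀ m, n + 1 ≤ m → extZero A B m := by
  intro n
  induction n with
  | zero =>
    intro A hA B hB m hm
    obtain ⟨X, d, ε, hmem, hz, hepi, ⟨z0, e0⟩, hd⟩ := hA
    haveI := hepi
    have hf : d 0 = 0 := (hz 1 (by omega)).eq_of_src _ _
    haveI : Mono ε := (ShortComplex.exact_iff_mono _ hf).1 e0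
    haveI : IsIso ε := isIso_of_mono_of_epi ε
    exact extZero_of_iso ε (h.hereditary _ _ (hmem 0 le_rfl) hB m (by omega))
  | succ n ih =>
    intro A hA B hB m hm
    obtain ⟨K, X₀, f, g, ⟨z, hse⟩, hX0, hK⟩ := resDimLE_unstep hA
    obtain ⟨k, rfl⟩ : ∃ k, m = k + 1 := ⟨m - 1, by omega⟩
    exact extZero_succ_of_ses hse k (ih K hK B hB k (by omega))
      (h.hereditary _ _ hX0 hB _ (by omega))

lemma resDimLE_of_extZero {𝒳 𝒴 : C → Prop} (h : CHCP 𝒳 𝒴) :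
    ∀ (n : ℕ) (A : C), (∀ B, 𝒴 B → extZero A B (n + 1)) → ResDimLE 𝒳 A n := by
  intro n
  induction n with
  | zero =>
    intro A hA
    exact resDimLE_of_mem ((h.cotorsion.eqLeft A).2 hA)
  | succ n ih =>
    intro A hA
    obtain ⟨⟨Y₀, X₀, f, g, hses, hX, hY⟩, -⟩ := h.complete A
    obtain ⟨z, hse⟩ := hses
    have hK : ∀ B, 𝒴 B → extZero Y₀ B (n + 1) := fun B hB =>
      extZero_pred_of_ses hse (n + 1) (h.hereditary _ _ hX hB _ (by omega)) (hA B hB)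
    exact resDimLE_step ⟨z, hse⟩ hX (ih Y₀ hK)

lemma resDimLE_iff {𝒳 𝒴 : C → Prop} (h : CHCP 𝒳 𝒴) (A : C) (n : ℕ) :
    ResDimLE 𝒳 A n ↔ ∀ B, 𝒴 B → extZero A B (n + 1) :=
  ⟨fun hA B hB => extZero_of_resDimLE h n A hA B hB (n + 1) le_rfl,
    fun hA => resDimLE_of_extZero h n A hA⟩

end Aux

/-- For a complete hereditary cotorsion pair `(𝒳, 𝒴)` and `n ≥ 1`:
`A` has `𝒳`-resolution dimension at most `n` iff `Ext^{n+1}(A, Y) = 0` for all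
`Y ∈ 𝒴`; consequently the `𝒳`-resolution dimension of `A` is the supremum of the
`i` such that `Ext^i(A, Y) ≠ 0` for some `Y ∈ 𝒴`. -/
theorem statement1 {C : Type u} [Category.{v} C] [Abelian C] [HasExt.{w} C]
    {𝒳 𝒴 : C → Prop} (h : CHCP 𝒳 𝒴) (A : C) (n : ℕ) (hn : 1 ≤ n) :
    (ResDimLE 𝒳 A n ↔ ∀ B, 𝒴 B → extZero A B (n + 1)) ∧
    ResDim 𝒳 A = ⨆ i ∈ {i : ℕ | ∃ B, 𝒴 B ∧ ¬ extZero A B i}, (i : ℕ∞) := by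
  classical
  refine ⟨resDimLE_iff h A n, ?_⟩
  by_cases hfin : ∃ m : ℕ, ResDimLE 𝒳 A m
  · have hdres : ResDimLE 𝒳 A (Nat.find hfin) := Nat.find_spec hfin
    have hL : ResDim 𝒳 A = (Nat.find hfin : ℕ∞) := by
      apply le_antisymm
      · exact sInf_le ⟨Nat.find hfin, rfl, hdres⟩
      · refine le_sInf ?_
        rintro m ⟨k, rfl, hk⟩
        exact_mod_cast Nat.find_min' hfin hk
    rw [hL]
    apply le_antisymm
    · rcases Nat.eq_zero_or_pos (Nat.find hfin) with h0 | hpos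
      · rw [h0]
        simp
      · obtain ⟨k, hk⟩ : ∃ k, Nat.find hfin = k + 1 := ⟨Nat.find hfin - 1, by omega⟩
        have hnk : ¬ ResDimLE 𝒳 A k := Nat.find_min hfin (by omega)
        rw [resDimLE_iff h A k] at hnk
        push_neg at hnk
        obtain ⟨B, hB, hne⟩ := hnk
        rw [hk]
        exact le_iSup₂ (f := fun (i : ℕ) (_ : i ∈ {i : ℕ | ∃ B, 𝒴 B ∧ ¬ extZero A B i}) =>
          (i : ℕ∞)) (k + 1) ⟨B, hB, hne⟩
    · refine iSup₂_le ?_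
      rintro i ⟨B, hB, hne⟩
      have hid : i ≤ Nat.find hfin := by
        by_contra hgt
        exact hne (extZero_of_resDimLE h _ A hdres B hB i (by omega))
      exact_mod_cast hid
  · push_neg at hfin
    have hL : ResDim 𝒳 A = ⊤ := by
      rw [ResDim, sInf_eq_top]
      rintro m ⟨k, rfl, hk⟩
      exact absurd hk (hfin k)
    rw [hL]
    have hmemS : ∀ k : ℕ, ((k + 1 : ℕ) : ℕ∞) ≤
        ⨆ i ∈ {i : ℕ | ∃ B, 𝒴 B ∧ ¬ extZero A B i}, (i : ℕ∞) := by
      intro k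
      have hnk := hfin k
      rw [resDimLE_iff h A k] at hnk
      push_neg at hnk
      obtain ⟨B, hB, hne⟩ := hnk
      exact le_iSup₂ (f := fun (i : ℕ) (_ : i ∈ {i : ℕ | ∃ B, 𝒴 B ∧ ¬ extZero A B i}) =>
        (i : ℕ∞)) (k + 1) ⟨B, hB, hne⟩
    rcases eq_or_ne (⨆ i ∈ {i : ℕ | ∃ B, 𝒴 B ∧ ¬ extZero A B i}, (i : ℕ∞)) ⊤ with ht | ht
    · rw [ht]
    · exfalso
      obtain ⟨s, hs⟩ := WithTop.ne_top_iff_exists.1 ht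
      have h2 := hmemS s
      rw [← hs] at h2
      have h3 : s + 1 ≤ s := by
        exact_mod_cast (show ((s + 1 : ℕ) : ℕ∞) ≤ ((s : ℕ) : ℕ∞) from h2)
      omega

end PaperAB
end

section
/- Let (Q, R̃) and (Q̃, R) be two complete hereditary cotorsion pairs in an abelian category A such that Q̃ ⊆ Q and Q ∩ R̃ = Q̃ ∩ R. If every object of A has finite Q-resolution dimension (with a common finite bound, i.e. sup over all objects is finite), then (Q, W, R) is a Hovey triple, where W is the class of objects with finite Q̃-resolution dimension. That is, W is thick and (Q, W ∩ R) = (Q, R̃) and (Q ∩ W, R) = (Q̃, R) are complete cotorsion pairs; in particular Q ∩ W = Q̃ and W ∩ R = R̃. -/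
open CategoryTheory Limits

universe w v u

namespace PaperAB

section Aux

open Abelian ZeroObject

variable {C : Type u} [Category.{v} C] [Abelian C] [HasExt.{w} C]

lemma extZero_of_forall {A B : C} {n : ℕ} (h : ∀ x : Abelian.Ext A B n, x = 0) :
    extZero A B n := ⟨fun a b => by rw [h a, h b]⟩

lemma extZero.eq_zero {A B : C} {n : ℕ} (h : extZero A B n) (x : Abelian.Ext A B n) : x = 0 :=
  @Subsingleton.elim _ h x 0

section LES

variable {A B D : C} {f : A ⟶ B} {g : B ⟶ D}

lemma IsSES.contra₂ (hS : IsSES f g) (Y : C) (n : ℕ)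
    (h₃ : extZero D Y n) (h₁ : extZero A Y n) : extZero B Y n := by
  obtain ⟨w, hS⟩ := hS
  refine extZero_of_forall fun x₂ => ?_
  obtain ⟨x₁, hx₁⟩ := Ext.contravariant_sequence_exact₂ hS Y x₂ (h₁.eq_zero _)
  rw [← hx₁, h₃.eq_zero x₁, Ext.comp_zero]

lemma IsSES.contra₁ (hS : IsSES f g) (Y : C) {n₀ n₁ : ℕ} (h : 1 + n₀ = n₁)
    (h₂ : extZero B Y n₀) (h₃ : extZero D Y n₁) : extZero A Y n₀ := by
  obtain ⟨w, hS⟩ := hS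
  refine extZero_of_forall fun x₁ => ?_
  obtain ⟨x₂, hx₂⟩ := Ext.contravariant_sequence_exact₁ hS Y x₁ h (h₃.eq_zero _)
  rw [← hx₂, h₂.eq_zero x₂, Ext.comp_zero]

lemma IsSES.contra₃ (hS : IsSES f g) (Y : C) {n₀ n₁ : ℕ} (h : 1 + n₀ = n₁)
    (h₂ : extZero B Y n₁) (h₁ : extZero A Y n₀) : extZero D Y n₁ := by
  obtain ⟨w, hS⟩ := hS
  refine extZero_of_forall fun x₃ => ?_
  obtain ⟨x₁, hx₁⟩ := Ext.contravariant_sequence_exact₃ hS Y x₃ (h₂.eq_zero _) h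
  rw [← hx₁, h₁.eq_zero x₁, Ext.comp_zero]

lemma IsSES.cov₂ (hS : IsSES f g) (X : C) (n : ℕ)
    (h₁ : extZero X A n) (h₃ : extZero X D n) : extZero X B n := by
  obtain ⟨w, hS⟩ := hS
  refine extZero_of_forall fun x₂ => ?_
  obtain ⟨x₁, hx₁⟩ := Ext.covariant_sequence_exact₂ X hS x₂ (h₃.eq_zero _)
  rw [← hx₁, h₁.eq_zero x₁, Ext.zero_comp]

lemma IsSES.cov₃ (hS : IsSES f g) (X : C) {n₀ n₁ : ℕ} (h : n₀ + 1 = n₁)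
    (h₂ : extZero X B n₀) (h₁ : extZero X A n₁) : extZero X D n₀ := by
  obtain ⟨w, hS⟩ := hS
  refine extZero_of_forall fun x₃ => ?_
  obtain ⟨x₂, hx₂⟩ := Ext.covariant_sequence_exact₃ X hS x₃ h (h₁.eq_zero _)
  rw [← hx₂, h₂.eq_zero x₂, Ext.zero_comp]

end LES

lemma extZero_retract_left {A B Y : C} {n : ℕ} (i : A ⟶ B) (p : B ⟶ A)
    (hip : i ≫ p = 𝟙 A) (h : extZero B Y n) : extZero A Y n :=
  extZero_of_forall fun x => by
    have h1 : (Ext.mk₀ (i ≫ p)).comp x (zero_add n) = x := by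
      rw [hip, Ext.mk₀_id_comp]
    rw [← h1, ← Ext.mk₀_comp_mk₀_assoc, h.eq_zero ((Ext.mk₀ p).comp x (zero_add n)),
      Ext.comp_zero]

/-- Dimension-shift data: `ExtVan 𝒴 A m` means `Ext^i(A, B) = 0` for all `B ∈ 𝒴`, `i > m`. -/
def ExtVan (𝒴 : C → Prop) (A : C) (m : ℕ) : Prop :=
  ∀ B, 𝒴 B → ∀ i, m < i → extZero A B i

lemma IsSES.extVan_of_extVan_ker {K X A : C} {f : K ⟶ X} {g : X ⟶ A} (hS : IsSES f g)
    {𝒴 : C → Prop} (hX : ∀ B, 𝒴 B → ∀ i, 1 ≤ i → extZero X B i)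
    {m : ℕ} (hK : ExtVan 𝒴 K m) : ExtVan 𝒴 A (m + 1) := by
  intro B hB i hi
  obtain ⟨j, rfl⟩ : ∃ j, i = 1 + j := ⟨i - 1, by omega⟩
  exact hS.contra₃ B rfl (hX B hB _ (by omega)) (hK B hB j (by omega))

lemma IsSES.extVan_ker_of_extVan {K X A : C} {f : K ⟶ X} {g : X ⟶ A} (hS : IsSES f g)
    {𝒴 : C → Prop} (hX : ∀ B, 𝒴 B → ∀ i, 1 ≤ i → extZero X B i)
    {m : ℕ} (hA : ExtVan 𝒴 A (m + 1)) : ExtVan 𝒴 K m := by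
  intro B hB i hi
  exact hS.contra₁ B rfl (hX B hB i (by omega)) (hA B hB (1 + i) (by omega))

section ExactHelpers

lemma exact_epi_precomp {E A B D : C} (p : E ⟶ A) [Epi p] {f : A ⟶ B} {g : B ⟶ D}
    {f₂ : E ⟶ B} (hf : p ≫ f = f₂) {w : f ≫ g = 0}
    (h : (ShortComplex.mk f g w).Exact) (w₂ : f₂ ≫ g = 0) :
    (ShortComplex.mk f₂ g w₂).Exact := by
  subst hf
  have := (ShortComplex.exact_iff_of_epi_of_isIso_of_mono
    (S₁ := ShortComplex.mk (p ≫ f) g w₂) (S₂ := ShortComplex.mk f g w)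
    { τ₁ := p, τ₂ := 𝟙 _, τ₃ := 𝟙 _, comm₁₂ := by simp, comm₂₃ := by simp })
  exact this.2 h

lemma exact_comp_mono_of_exact {A B D D' : C} {f : A ⟶ B} {g : B ⟶ D} (m : D ⟶ D') [Mono m]
    {g₂ : B ⟶ D'} (hg : g ≫ m = g₂) {w : f ≫ g = 0}
    (h : (ShortComplex.mk f g w).Exact) (w₂ : f ≫ g₂ = 0) :
    (ShortComplex.mk f g₂ w₂).Exact := by
  subst hg
  have := (ShortComplex.exact_iff_of_epi_of_isIso_of_mono
    (S₁ := ShortComplex.mk f g w) (S₂ := ShortComplex.mk f (g ≫ m) w₂)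
    { τ₁ := 𝟙 _, τ₂ := 𝟙 _, τ₃ := m, comm₁₂ := by simp, comm₂₃ := by simp })
  exact this.1 h

lemma exact_of_exact_comp_mono {A B D D' : C} {f : A ⟶ B} {g : B ⟶ D} (m : D ⟶ D') [Mono m]
    {g₂ : B ⟶ D'} (hg : g ≫ m = g₂) {w₂ : f ≫ g₂ = 0}
    (h : (ShortComplex.mk f g₂ w₂).Exact) (w : f ≫ g = 0) :
    (ShortComplex.mk f g w).Exact := by
  subst hg
  have := (ShortComplex.exact_iff_of_epi_of_isIso_of_mono
    (S₁ := ShortComplex.mk f g w) (S₂ := ShortComplex.mk f (g ≫ m) w₂)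
    { τ₁ := 𝟙 _, τ₂ := 𝟙 _, τ₃ := m, comm₁₂ := by simp, comm₂₃ := by simp })
  exact this.2 h

end ExactHelpers

lemma extVan_of_resDimLE {𝒳 𝒴 : C → Prop}
    (hXY : ∀ X B, 𝒳 X → 𝒴 B → ∀ i, 1 ≤ i → extZero X B i) :
    ∀ (n : ℕ) (A : C), ResDimLE 𝒳 A n → ExtVan 𝒴 A n := by
  intro n
  induction n with
  | zero =>
    rintro A ⟨X, d, ε, hmem, hzero, hepi, ⟨w0, he0⟩, hex⟩
    have hd0 : d 0 = 0 := (hzero 1 (by omega)).eq_of_src _ _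
    have hm : Mono ε := (ShortComplex.exact_iff_mono _ hd0).1 he0
    have : IsIso ε := isIso_of_mono_of_epi ε
    intro B hB i hi
    exact extZero_retract_left (inv ε) ε (by simp) (hXY _ _ (hmem 0 (le_refl 0)) hB i hi)
  | succ n ih =>
    rintro A ⟨X, d, ε, hmem, hzero, hepi, ⟨w0, he0⟩, hex⟩
    have hK : ResDimLE 𝒳 (kernel ε) n := by
      refine ⟨fun i => X (i + 1), fun i => d (i + 1), kernel.lift ε (d 0) w0,
        fun i hi => hmem (i + 1) (by omega), fun i hi => hzero (i + 1) (by omega), ?_, ?_,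
        fun i => hex (i + 1)⟩
      · rw [ShortComplex.exact_iff_epi_kernel_lift] at he0
        exact he0
      · obtain ⟨w1, he1⟩ := hex 0
        have hz : d 1 ≫ kernel.lift ε (d 0) w0 = 0 := by
          rw [← cancel_mono (kernel.ι ε)]
          simp [w1]
        exact ⟨hz, exact_of_exact_comp_mono (kernel.ι ε) (kernel.lift_ι ε (d 0) w0) he1 hz⟩
    have hse : IsSES (kernel.ι ε) ε :=
      ⟨kernel.condition ε,
        { exact := ShortComplex.exact_of_f_is_kernel _ (kernelIsKernel ε),
          mono_f := inferInstance, epi_g := hepi }⟩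
    exact hse.extVan_of_extVan_ker
      (fun B hB i hi => hXY _ _ (hmem 0 (by omega)) hB i hi) (ih _ hK)

lemma resDimLE_of_extVan {𝒳 𝒴 : C → Prop}
    (hleft : ∀ A, (∀ B, 𝒴 B → extZero A B 1) → 𝒳 A)
    (hXY : ∀ X B, 𝒳 X → 𝒴 B → ∀ i, 1 ≤ i → extZero X B i)
    (hcompl : ∀ A : C, ∃ (Y X : C) (f : Y ⟶ X) (g : X ⟶ A), IsSES f g ∧ 𝒳 X ∧ 𝒴 Y) :
    ∀ (m : ℕ) (A : C), ExtVan 𝒴 A m → ResDimLE 𝒳 A m := by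
  intro m
  induction m with
  | zero =>
    intro A hA
    have hAX : 𝒳 A := hleft A fun B hB => hA B hB 1 (by omega)
    refine ⟨fun i => Nat.casesOn i A fun _ => 0, fun _ => 0, 𝟙 A, ?_, ?_, ?_, ?_, ?_⟩
    · intro i hi
      obtain rfl : i = 0 := by omega
      exact hAX
    · intro i hi
      cases i with
      | zero => omega
      | succ j => exact isZero_zero C
    · infer_instance
    · exact ⟨by simp, (ShortComplex.exact_iff_mono _ rfl).2 inferInstance⟩
    · intro i
      exact ⟨by simp, ShortComplex.exact_of_isZero_X₂ _ (isZero_zero C)⟩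
  | succ m ih =>
    intro A hA
    obtain ⟨Y₁, X₀, f, g, hses, hX₀, hY₁⟩ := hcompl A
    have hY : ExtVan 𝒴 Y₁ m :=
      hses.extVan_ker_of_extVan (fun B hB i hi => hXY _ _ hX₀ hB i hi) hA
    obtain ⟨X', d', ε', hmem, hzero, hepi, ⟨w0, he0⟩, hex⟩ := ih Y₁ hY
    obtain ⟨wfg, hSE⟩ := hses
    haveI : Mono f := hSE.mono_f
    haveI : Epi ε' := hepi
    have wd0 : (ε' ≫ f) ≫ g = 0 := by rw [Category.assoc, wfg, comp_zero]
    refine ⟨fun i => Nat.casesOn i X₀ X',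
      fun i => Nat.casesOn (motive := fun i =>
        ((Nat.casesOn (i + 1) X₀ X' : C) ⟶ (Nat.casesOn i X₀ X' : C))) i (ε' ≫ f) d',
      g, ?_, ?_, hSE.epi_g, ?_, ?_⟩
    · intro i hi
      cases i with
      | zero => exact hX₀
      | succ j => exact hmem j (by omega)
    · intro i hi
      cases i with
      | zero => omega
      | succ j => exact hzero j (by omega)
    · exact ⟨wd0, exact_epi_precomp ε' rfl hSE.exact wd0⟩
    · intro i
      cases i with
      | zero =>
        have wz : d' 0 ≫ ε' ≫ f = 0 := by rw [← Category.assoc, w0, zero_comp]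
        exact ⟨wz, exact_comp_mono_of_exact f rfl he0 wz⟩
      | succ j => exact hex j

end Aux

/-- Given complete hereditary cotorsion pairs `(Q, R̃)` and
`(Q̃, R)` with `Q̃ ⊆ Q` and `Q ∩ R̃ = Q̃ ∩ R`, if the `Q`-resolution dimension of
all objects is uniformly bounded, then `(Q, W, R)` is a Hovey triple, where `W`
is the class of objects of finite `Q̃`-resolution dimension: `W` is thick,
`Q ∩ W = Q̃` and `W ∩ R = R̃`. -/
theorem statement5 {C : Type u} [Category.{v} C] [Abelian C] [HasExt.{w} C]
    {Q R Qt Rt : C → Prop}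
    (h1 : CHCP Q Rt) (h2 : CHCP Qt R)
    (hsub : ∀ A, Qt A → Q A)
    (hcore : ∀ A, (Q A ∧ Rt A) ↔ (Qt A ∧ R A))
    (hbound : ∃ n, ∀ A : C, ResDimLE Q A n) :
    IsThick (FinResDim Qt) ∧
    (∀ A, (Q A ∧ FinResDim Qt A) ↔ Qt A) ∧
    (∀ A, (FinResDim Qt A ∧ R A) ↔ Rt A) := by
  obtain ⟨n, hn⟩ := hbound
  have memQ : ∀ A, (∀ B, Rt B → extZero A B 1) → Q A := fun A h => (h1.cotorsion.eqLeft A).2 h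
  have memQt : ∀ A, (∀ B, R B → extZero A B 1) → Qt A := fun A h => (h2.cotorsion.eqLeft A).2 h
  have memR : ∀ B, (∀ A, Qt A → extZero A B 1) → R B := fun B h => (h2.cotorsion.eqRight B).2 h
  have memRt : ∀ B, (∀ A, Q A → extZero A B 1) → Rt B := fun B h => (h1.cotorsion.eqRight B).2 h
  have extQRt : ∀ A B, Q A → Rt B → ∀ i, 1 ≤ i → extZero A B i := h1.hereditary
  have extQtR : ∀ A B, Qt A → R B → ∀ i, 1 ≤ i → extZero A B i := h2.hereditary
  have extRt : ∀ X B, Rt B → Q X → extZero X B 1 :=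
    fun X B hB hX => (h1.cotorsion.eqRight B).1 hB X hX
  have extR : ∀ X B, R B → Qt X → extZero X B 1 :=
    fun X B hB hX => (h2.cotorsion.eqRight B).1 hB X hX
  have RtR : ∀ B, Rt B → R B := fun B hB => memR B fun A hA => extRt A B hB (hsub A hA)
  have RtExt : ∀ {A B D : C} (f : A ⟶ B) (g : B ⟶ D), IsSES f g → Rt A → Rt D → Rt B :=
    fun f g hses hA hD => memRt _ fun X hX => hses.cov₂ X 1 (extRt X _ hA hX) (extRt X _ hD hX)
  have RExt : ∀ {A B D : C} (f : A ⟶ B) (g : B ⟶ D), IsSES f g → R A → R D → R B :=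
    fun f g hses hA hD => memR _ fun X hX => hses.cov₂ X 1 (extR X _ hA hX) (extR X _ hD hX)
  have WtoVan : ∀ A : C, FinResDim Qt A → ∃ m, ExtVan R A m :=
    fun A hA => hA.elim fun mm hr => ⟨mm, extVan_of_resDimLE h2.hereditary mm A hr⟩
  have VanToW : ∀ (m : ℕ) (A : C), ExtVan R A m → ResDimLE Qt A m :=
    resDimLE_of_extVan memQt h2.hereditary (fun A => (h2.complete A).1)
  have hQ_res : ∀ A : C, ExtVan Rt A n := fun A => extVan_of_resDimLE h1.hereditary n A (hn A)
  have RtW : ∀ (k : ℕ) (B : C), Rt B → ExtVan Rt B k → ExtVan R B k := by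
    intro k
    induction k with
    | zero =>
      intro B hB hvan
      have hQB : Q B := memQ B fun B' hB' => hvan B' hB' 1 (by omega)
      have hQtB : Qt B := ((hcore B).1 ⟨hQB, hB⟩).1
      exact fun B' hB' i hi => extQtR B B' hQtB hB' i hi
    | succ k ih =>
      intro B hB hvan
      obtain ⟨V, P, f, g, hses, hP, hV⟩ := (h1.complete B).1
      have hPRt : Rt P := RtExt f g hses hV hB
      have hPQt : Qt P := ((hcore P).1 ⟨hP, hPRt⟩).1
      have hVvan : ExtVan Rt V k :=
        hses.extVan_ker_of_extVan (fun B' hB' i hi => extQRt P B' hP hB' i hi) hvan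
      exact hses.extVan_of_extVan_ker (fun B' hB' i hi => extQtR P B' hPQt hB' i hi)
        (ih V hV hVvan)
  have G2 : ∀ A, (Q A ∧ FinResDim Qt A) ↔ Qt A := by
    intro A
    constructor
    · rintro ⟨hQA, hW⟩
      obtain ⟨m, hvan⟩ := WtoVan A hW
      have step : ∀ j : ℕ, ExtVan R A (j + 1) → ExtVan R A j := by
        intro j hj B' hB' i hi
        rcases Nat.lt_or_ge (j + 1) i with h' | h'
        · exact hj B' hB' i h'
        · obtain rfl : i = j + 1 := by omega
          obtain ⟨R', Q₀, f, g, hses, hQ₀, hR'⟩ := (h2.complete B').1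
          have hQ₀R : R Q₀ := RExt f g hses hR' hB'
          have hQ₀Rt : Rt Q₀ := ((hcore Q₀).2 ⟨hQ₀, hQ₀R⟩).2
          exact hses.cov₃ A rfl (extQRt A Q₀ hQA hQ₀Rt (j + 1) (by omega))
            (hj R' hR' (j + 2) (by omega))
      have down : ∀ j : ℕ, ExtVan R A j → ExtVan R A 0 := by
        intro j
        induction j with
        | zero => exact id
        | succ j ihj => exact fun h => ihj (step j h)
      exact memQt A fun B' hB' => down m hvan B' hB' 1 (by omega)
    · intro hQtA
      exact ⟨hsub A hQtA,
        ⟨0, VanToW 0 A fun B' hB' i hi => extQtR A B' hQtA hB' i (by omega)⟩⟩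
  have G3 : ∀ A, (FinResDim Qt A ∧ R A) ↔ Rt A := by
    intro B
    constructor
    · rintro ⟨hW, hR⟩
      obtain ⟨mB, vB⟩ := WtoVan B hW
      obtain ⟨R', Q', f, g, hses, hR', hQ'⟩ := (h1.complete B).2
      have vR' : ExtVan R R' n := RtW n R' hR' (hQ_res R')
      have vQ' : ExtVan R Q' (max mB n + 1) := by
        intro B' hB' i hi
        obtain ⟨j, rfl⟩ : ∃ j, i = 1 + j := ⟨i - 1, by omega⟩
        exact hses.contra₃ B' rfl (vR' B' hB' (1 + j) (by omega)) (vB B' hB' j (by omega))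
      have hQ'Qt : Qt Q' := (G2 Q').1 ⟨hQ', ⟨_, VanToW _ Q' vQ'⟩⟩
      have h1ext : extZero Q' B 1 := extR Q' B hR hQ'Qt
      refine memRt B fun X hX => ?_
      have hXR' : extZero X R' 1 := extRt X R' hR' hX
      obtain ⟨wz, hSE⟩ := hses
      refine extZero_of_forall fun y => ?_
      obtain ⟨x₂, hx₂⟩ := Abelian.Ext.contravariant_sequence_exact₁ hSE B
        (Abelian.Ext.mk₀ (𝟙 B)) rfl (h1ext.eq_zero _)
      have hx₂' : (Abelian.Ext.mk₀ f).comp x₂ (zero_add 0) = Abelian.Ext.mk₀ (𝟙 B) := hx₂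
      have hyf : y.comp (Abelian.Ext.mk₀ f) (add_zero 1) = 0 := hXR'.eq_zero _
      calc y = y.comp (Abelian.Ext.mk₀ (𝟙 B)) (add_zero 1) := by
              rw [Abelian.Ext.comp_mk₀_id]
        _ = (y.comp (Abelian.Ext.mk₀ f) (add_zero 1)).comp x₂ (add_zero 1) := by
              rw [Abelian.Ext.comp_assoc_of_second_deg_zero, hx₂']
        _ = 0 := by rw [hyf, Abelian.Ext.zero_comp]
    · intro hB
      exact ⟨⟨n, VanToW n B (RtW n B hB (hQ_res B))⟩, RtR B hB⟩
  refine ⟨⟨?_, ?_, ?_, ?_⟩, G2, G3⟩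
  · intro A B i p hip hB
    obtain ⟨m, v⟩ := WtoVan B hB
    exact ⟨m, VanToW m A fun B' hB' i' hi' => extZero_retract_left i p hip (v B' hB' i' hi')⟩
  · intro A B D f g hses hA hD
    obtain ⟨mA, vA⟩ := WtoVan A hA
    obtain ⟨mD, vD⟩ := WtoVan D hD
    refine ⟨max mA mD, VanToW _ B fun B' hB' i hi => ?_⟩
    exact hses.contra₂ B' i (vD B' hB' i (by omega)) (vA B' hB' i (by omega))
  · intro A B D f g hses hB hD
    obtain ⟨mB, vB⟩ := WtoVan B hB
    obtain ⟨mD, vD⟩ := WtoVan D hD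
    refine ⟨max mB mD, VanToW _ A fun B' hB' i hi => ?_⟩
    exact hses.contra₁ B' rfl (vB B' hB' i (by omega)) (vD B' hB' (1 + i) (by omega))
  · intro A B D f g hses hA hB
    obtain ⟨mA, vA⟩ := WtoVan A hA
    obtain ⟨mB, vB⟩ := WtoVan B hB
    refine ⟨max mA mB + 1, VanToW _ D fun B' hB' i hi => ?_⟩
    obtain ⟨j, rfl⟩ : ∃ j, i = 1 + j := ⟨i - 1, by omega⟩
    exact hses.contra₃ B' rfl (vB B' hB' (1 + j) (by omega)) (vA B' hB' j (by omega))

end PaperAB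
end
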